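/- Let v_1,...,v_n be independent random variables supported on [v_min, v_max] with v_min ≥ 0, let ξ > 1, and let p ∈ ℝ^n be any price vector. Then there exists a price vector p'' with every coordinate in [ξ·v_min, v_max] such that E[R_{p''}] ≥ E[R_p] − ξ·v_min. (Here assume ξ·v_min ≤ v_max.) -/

import Mathlib

open MeasureTheory ProbabilityTheory

open scoped Classical in
/-- Revenue of a unit-demand buyer with valuations `v` facing prices `p`:
the buyer purchases the item `i` maximizing `v i - p i` provided `v i - p i ≥ 0`
(ties broken by smallest index), paying `p i`; revenue is `0` otherwise. -/
noncomputable def revenue {n : ℕ} (p v : Fin n → ℝ) : ℝ :=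
  let S : Finset (Fin n) :=
    Finset.univ.filter (fun i => 0 ≤ v i - p i ∧ ∀ j, v j - p j ≤ v i - p i)
  if h : S.Nonempty then p (S.min' h) else 0

open scoped Classical in
lemma revenue_eq {n : ℕ} (p v : Fin n → ℝ) :
    revenue p v =
      if h : (Finset.univ.filter
          (fun i => 0 ≤ v i - p i ∧ ∀ j, v j - p j ≤ v i - p i)).Nonempty
      then p ((Finset.univ.filter
          (fun i => 0 ≤ v i - p i ∧ ∀ j, v j - p j ≤ v i - p i)).min' h)
      else 0 := rfl

open scoped Classical in
lemma revenue_nonneg {n : ℕ} {p : Fin n → ℝ} (hp : ∀ i, 0 ≤ p i)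
    (v : Fin n → ℝ) : 0 ≤ revenue p v := by
  rw [revenue_eq]
  split
  · exact hp _
  · exact le_rfl

open scoped Classical in
lemma revenue_abs_le {n : ℕ} (p v : Fin n → ℝ) :
    |revenue p v| ≤ ∑ i, |p i| := by
  rw [revenue_eq]
  split
  · exact Finset.single_le_sum (f := fun i => |p i|) (fun i _ => abs_nonneg _)
      (Finset.mem_univ _)
  · simp [Finset.sum_nonneg (fun i _ => abs_nonneg (p i))]

open scoped Classical in
lemma revenue_key {n : ℕ} (p v : Fin n → ℝ) {b vmax : ℝ} (hb : 0 ≤ b)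
    (hbv : b ≤ vmax) (hv : ∀ i, v i ≤ vmax) :
    revenue p v - b ≤ revenue (fun i => max (min (p i) vmax) b) v := by
  set q : Fin n → ℝ := fun i => max (min (p i) vmax) b with hq
  have hq0 : ∀ i, 0 ≤ q i := fun i => le_trans hb (le_max_right _ _)
  have hrq0 : 0 ≤ revenue q v := revenue_nonneg hq0 v
  rw [revenue_eq p v]
  split
  · rename_i hS
    set S := Finset.univ.filter
        (fun i => 0 ≤ v i - p i ∧ ∀ j, v j - p j ≤ v i - p i) with hSdef
    set j0 := S.min' hS with hj0
    obtain ⟨-, h1, h2⟩ := Finset.mem_filter.mp (S.min'_mem hS)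
    by_cases hpb : p j0 < b
    · linarith
    push_neg at hpb
    have hpj0max : p j0 ≤ vmax := le_trans (by linarith) (hv j0)
    have hqj0 : q j0 = p j0 := by
      rw [hq]; simp only []; rw [min_eq_left hpj0max, max_eq_left hpb]
    have hA : ∀ i, v i - q i ≤ v j0 - p j0 := by
      intro i
      by_cases hpi : p i ≤ vmax
      · have hle : p i ≤ q i := by
          rw [hq]; simp only []; rw [min_eq_left hpi]; exact le_max_left _ _
        linarith [h2 i]
      · push_neg at hpi
        have hqi : q i = vmax := by
          rw [hq]; simp only []; rw [min_eq_right hpi.le, max_eq_left hbv]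
        rw [hqi]
        linarith [hv i]
    have hj0T : j0 ∈ Finset.univ.filter
        (fun i => 0 ≤ v i - q i ∧ ∀ j, v j - q j ≤ v i - q i) := by
      rw [Finset.mem_filter]
      refine ⟨Finset.mem_univ _, ?_, ?_⟩
      · rw [hqj0]; exact h1
      · intro j; rw [hqj0]; exact hA j
    have hT : (Finset.univ.filter
        (fun i => 0 ≤ v i - q i ∧ ∀ j, v j - q j ≤ v i - q i)).Nonempty :=
      ⟨j0, hj0T⟩
    set T := Finset.univ.filter
        (fun i => 0 ≤ v i - q i ∧ ∀ j, v j - q j ≤ v i - q i) with hTdef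
    have hrevq : revenue q v = q (T.min' hT) :=
      (revenue_eq q v).trans (dif_pos hT)
    rw [hrevq]
    set k := T.min' hT with hk
    obtain ⟨-, hk1, hk2⟩ := Finset.mem_filter.mp (T.min'_mem hT)
    have hks : v k - q k = v j0 - p j0 := by
      have := hk2 j0
      rw [hqj0] at this
      exact le_antisymm (hA k) this
    by_cases hpk : p k ≤ vmax
    · by_cases hpkb : b ≤ p k
      · have hqk : q k = p k := by
          rw [hq]; simp only []; rw [min_eq_left hpk, max_eq_left hpkb]
        have hkS : k ∈ S := by
          rw [hSdef, Finset.mem_filter]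
          refine ⟨Finset.mem_univ _, ?_, ?_⟩
          · rw [hqk] at hk1; exact hk1
          · intro j
            rw [hqk] at hks
            linarith [h2 j]
        have h3 : j0 ≤ k := S.min'_le k hkS
        have h4 : k ≤ j0 := T.min'_le j0 hj0T
        have : k = j0 := le_antisymm h4 h3
        rw [hqk, this]
        linarith
      · exfalso
        push_neg at hpkb
        have hqk : q k = b := by
          rw [hq]; simp only []; rw [min_eq_left hpk, max_eq_right hpkb.le]
        rw [hqk] at hks
        linarith [h2 k]
    · push_neg at hpk
      have hqk : q k = vmax := by
        rw [hq]; simp only []; rw [min_eq_right hpk.le, max_eq_left hbv]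
      rw [hqk]
      linarith
  · linarith

open scoped Classical in
lemma revenue_eq_sum {n : ℕ} (p v : Fin n → ℝ) :
    revenue p v = ∑ i, if ((0 ≤ v i - p i ∧ ∀ j, v j - p j ≤ v i - p i) ∧
        ∀ j, j < i → ¬ (0 ≤ v j - p j ∧ ∀ k, v k - p k ≤ v j - p j)) then p i
      else 0 := by
  rw [revenue_eq]
  set S := Finset.univ.filter
      (fun i => 0 ≤ v i - p i ∧ ∀ j, v j - p j ≤ v i - p i) with hSdef
  have hmem : ∀ i, i ∈ S ↔ (0 ≤ v i - p i ∧ ∀ j, v j - p j ≤ v i - p i) := by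
    intro i; rw [hSdef, Finset.mem_filter]; simp
  split
  · rename_i hS
    rw [Finset.sum_eq_single (S.min' hS)]
    · rw [if_pos]
      refine ⟨(hmem _).mp (S.min'_mem hS), ?_⟩
      intro j hj hcond
      exact absurd (S.min'_le j ((hmem j).mpr hcond)) (not_le.mpr hj)
    · intro i _ hi
      rw [if_neg]
      rintro ⟨hc, hmin⟩
      have hle : S.min' hS ≤ i := S.min'_le i ((hmem i).mpr hc)
      have hlt : S.min' hS < i := lt_of_le_of_ne hle (fun h => hi h.symm)
      exact hmin _ hlt ((hmem _).mp (S.min'_mem hS))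
    · intro h; exact absurd (Finset.mem_univ _) h
  · rename_i hS
    rw [Finset.sum_eq_zero]
    intro i _
    rw [if_neg]
    rintro ⟨hc, -⟩
    exact hS ⟨i, (hmem i).mpr hc⟩

open scoped Classical in
lemma measurable_revenue_comp {Ω : Type*} [MeasurableSpace Ω]
    {n : ℕ} (V : Fin n → Ω → ℝ) (hVmeas : ∀ i, Measurable (V i))
    (p : Fin n → ℝ) :
    Measurable (fun ω => revenue p (fun i => V i ω)) := by
  have hcond : ∀ i : Fin n, MeasurableSet
      {ω | 0 ≤ V i ω - p i ∧ ∀ j, V j ω - p j ≤ V i ω - p i} := by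
    intro i
    have h1 : MeasurableSet {ω | 0 ≤ V i ω - p i} :=
      measurableSet_le measurable_const ((hVmeas i).sub measurable_const)
    have h2 : MeasurableSet {ω | ∀ j, V j ω - p j ≤ V i ω - p i} := by
      rw [Set.setOf_forall]
      exact MeasurableSet.iInter fun j =>
        measurableSet_le ((hVmeas j).sub measurable_const)
          ((hVmeas i).sub measurable_const)
    exact h1.inter h2
  have : (fun ω => revenue p (fun i => V i ω)) = fun ω =>
      ∑ i, if ((0 ≤ V i ω - p i ∧ ∀ j, V j ω - p j ≤ V i ω - p i) ∧
        ∀ j, j < i → ¬ (0 ≤ V j ω - p j ∧ ∀ k, V k ω - p k ≤ V j ω - p j))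
      then p i else 0 := by
    funext ω
    exact revenue_eq_sum p (fun i => V i ω)
  rw [this]
  apply Finset.measurable_sum
  intro i _
  apply Measurable.ite _ measurable_const measurable_const
  apply MeasurableSet.inter (hcond i)
  show MeasurableSet {ω | ∀ j, j < i → ¬ (0 ≤ V j ω - p j ∧
      ∀ k, V k ω - p k ≤ V j ω - p j)}
  rw [Set.setOf_forall]
  apply MeasurableSet.iInter
  intro j
  by_cases hj : j < i
  · simp only [hj, true_implies]
    exact (hcond j).compl
  · simp only [hj, false_implies, Set.setOf_true]
    exact MeasurableSet.univ

open scoped Classical in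
lemma integrable_revenue_comp {Ω : Type*} [MeasurableSpace Ω]
    (μ : Measure Ω) [IsProbabilityMeasure μ]
    {n : ℕ} (V : Fin n → Ω → ℝ) (hVmeas : ∀ i, Measurable (V i))
    (p : Fin n → ℝ) :
    Integrable (fun ω => revenue p (fun i => V i ω)) μ := by
  apply Integrable.mono' (integrable_const (∑ i, |p i|))
    (measurable_revenue_comp V hVmeas p).aestronglyMeasurable
  filter_upwards with ω
  exact revenue_abs_le p _

theorem exists_restricted_price_vector_near_optimal
    {Ω : Type*} [MeasurableSpace Ω] (μ : Measure Ω) [IsProbabilityMeasure μ]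
    {n : ℕ} (V : Fin n → Ω → ℝ) (hVmeas : ∀ i, Measurable (V i))
    (hindep : iIndepFun V μ)
    (vmin vmax : ℝ) (hvmin : 0 ≤ vmin)
    (hsupp : ∀ i, ∀ᵐ ω ∂μ, V i ω ∈ Set.Icc vmin vmax)
    (ξ : ℝ) (hξ : 1 < ξ) (hξle : ξ * vmin ≤ vmax)
    (p : Fin n → ℝ) :
    ∃ p'' : Fin n → ℝ, (∀ i, p'' i ∈ Set.Icc (ξ * vmin) vmax) ∧
      ∫ ω, revenue p (fun i => V i ω) ∂μ - ξ * vmin ≤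
        ∫ ω, revenue p'' (fun i => V i ω) ∂μ := by
  classical
  set b := ξ * vmin with hbdef
  have hb : 0 ≤ b := mul_nonneg (le_of_lt (lt_trans zero_lt_one hξ)) hvmin
  refine ⟨fun i => max (min (p i) vmax) b, ?_, ?_⟩
  · intro i
    exact ⟨le_max_right _ _, max_le (le_trans (min_le_right _ _) le_rfl) hξle⟩
  · have hae : ∀ᵐ ω ∂μ, ∀ i, V i ω ≤ vmax := by
      rw [MeasureTheory.ae_all_iff]
      intro i
      filter_upwards [hsupp i] with ω hω using hω.2
    have hptwise : ∀ᵐ ω ∂μ,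
        revenue p (fun i => V i ω) ≤
          revenue (fun i => max (min (p i) vmax) b) (fun i => V i ω) + b := by
      filter_upwards [hae] with ω hω
      have := revenue_key p (fun i => V i ω) hb hξle hω
      linarith
    have h1 := integrable_revenue_comp μ V hVmeas p
    have h2 := integrable_revenue_comp μ V hVmeas
      (fun i => max (min (p i) vmax) b)
    have hle := integral_mono_ae h1 (h2.add (integrable_const b)) hptwise
    simp only [Pi.add_apply] at hle
    rw [integral_add h2 (integrable_const b), integral_const] at hle
    simp only [measure_univ, ENNReal.toReal_one, one_smul, probReal_univ] at hle
    linarith
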